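/- Let M be a finite nonempty set and let H be a hierarchy on M. Consider the simple graph whose vertex set is H, two distinct members A, B ∈ H being adjacent if and only if one covers the other in the inclusion order on H (i.e., A ⊊ B and no C ∈ H satisfies A ⊊ C ⊊ B, or symmetrically). Then this graph is a tree (connected and acyclic). -/

import Mathlib

/-- The Hasse diagram of a hierarchy on a finite nonempty set, viewed as an undirected
simple graph (members adjacent iff one covers the other in the inclusion order), is a
tree. -/
theorem stmt11 (M : Type*) [Finite M] [Nonempty M] (H : Set (Set M))
    (h1 : ∅ ∉ H) (h2 : ∀ a : M, {a} ∈ H) (h3 : Set.univ ∈ H)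
    (h4 : ∀ A ∈ H, ∀ B ∈ H, A ∩ B = ∅ ∨ A ⊆ B ∨ B ⊆ A) :
    (SimpleGraph.fromRel (fun A B : H =>
      (A : Set M) ⊂ B ∧ ¬ ∃ C ∈ H, (A : Set M) ⊂ C ∧ C ⊂ (B : Set M))).IsTree := by
  classical
  set r : H → H → Prop := fun A B =>
      (A : Set M) ⊂ B ∧ ¬ ∃ C ∈ H, (A : Set M) ⊂ C ∧ C ⊂ (B : Set M) with hr
  set G := SimpleGraph.fromRel r with hGdef
  have hne : ∀ A : Set M, A ∈ H → A.Nonempty := by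
    intro A hA
    rcases A.eq_empty_or_nonempty with rfl | h
    · exact absurd hA h1
    · exact h
  have hcomp : ∀ A ∈ H, ∀ B ∈ H, (A ∩ B).Nonempty → A ⊆ B ∨ B ⊆ A := by
    intro A hA B hB hAB
    rcases h4 A hA B hB with h | h | h
    · rw [h] at hAB; exact absurd rfl hAB.ne_empty
    · exact Or.inl h
    · exact Or.inr h
  -- every non-univ member has a minimum strict superset in H
  have hmin : ∀ A ∈ H, A ≠ Set.univ →
      ∃ P, (P ∈ H ∧ A ⊂ P) ∧ ∀ B ∈ H, A ⊂ B → P ⊆ B := by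
    intro A hA hAu
    have hSfin : {B | B ∈ H ∧ A ⊂ B}.Finite := Set.toFinite _
    have hSne : (Set.univ : Set M) ∈ {B | B ∈ H ∧ A ⊂ B} :=
      ⟨h3, (Set.ssubset_univ_iff).2 hAu⟩
    obtain ⟨P, hPS, hPmin⟩ := hSfin.exists_minimalFor id _ ⟨_, hSne⟩
    refine ⟨P, hPS, ?_⟩
    intro B hB hAB
    have hABn : (P ∩ B).Nonempty := by
      obtain ⟨a, ha⟩ := hne A hA
      exact ⟨a, hPS.2.subset ha, hAB.subset ha⟩
    rcases hcomp P hPS.1 B hB hABn with h | h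
    · exact h
    · exact hPmin ⟨hB, hAB⟩ h
  -- a cover is necessarily the minimum strict superset
  have hcovmin : ∀ A ∈ H, ∀ B ∈ H, A ⊂ B → (¬ ∃ C ∈ H, A ⊂ C ∧ C ⊂ B) →
      ∀ P, ((P ∈ H ∧ A ⊂ P) ∧ ∀ D ∈ H, A ⊂ D → P ⊆ D) → B = P := by
    intro A hA B hB hAB hnomid P hP
    have hPB : P ⊆ B := hP.2 B hB hAB
    rcases hPB.eq_or_ssubset with h | h
    · exact h.symm
    · exact absurd ⟨P, hP.1.1, hP.1.2, h⟩ hnomid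
  -- connectivity
  have root : H := ⟨Set.univ, h3⟩
  have hreach : ∀ n : ℕ, ∀ s : Set M, ∀ hs : s ∈ H, sᶜ.ncard ≤ n →
      G.Reachable ⟨s, hs⟩ ⟨Set.univ, h3⟩ := by
    intro n
    induction n with
    | zero =>
      intro s hs hc
      have h0 : sᶜ = ∅ := (Set.ncard_eq_zero (Set.toFinite sᶜ)).mp (Nat.le_zero.mp hc)
      have huniv : s = Set.univ := by
        simpa using congrArg compl h0
      subst huniv
      exact SimpleGraph.Reachable.refl _
    | succ n ih =>
      intro s hs hc
      by_cases hsu : s = Set.univ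
      · subst hsu; exact SimpleGraph.Reachable.refl _
      · obtain ⟨P, ⟨hPH, hsP⟩, hPmin⟩ := hmin s hs hsu
        have hadj : G.Adj ⟨s, hs⟩ ⟨P, hPH⟩ := by
          rw [hGdef, SimpleGraph.fromRel_adj]
          refine ⟨?_, Or.inl ⟨hsP, ?_⟩⟩
          · intro h
            exact hsP.ne (congrArg Subtype.val h)
          · rintro ⟨C, hC, hsC, hCP⟩
            exact hCP.not_subset (hPmin C hC hsC)
        have hcard' : Pᶜ.ncard ≤ n := by
          have hlt : Pᶜ ⊂ sᶜ := by
            rw [Set.ssubset_iff_subset_ne]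
            refine ⟨Set.compl_subset_compl.mpr hsP.subset, fun hcon => ?_⟩
            have hPs : P = s := by simpa using congrArg compl hcon
            exact hsP.ne hPs.symm
          have := Set.ncard_lt_ncard hlt (Set.toFinite sᶜ)
          omega
        exact hadj.reachable.trans (ih P hPH hcard')
  haveI : Nonempty (↥H) := ⟨root⟩
  have hconn : G.Connected := by
    rw [SimpleGraph.connected_iff]
    refine ⟨fun A B => ?_, inferInstance⟩
    have hA := hreach ((A : Set M)ᶜ.ncard) A A.2 le_rfl
    have hB := hreach ((B : Set M)ᶜ.ncard) B B.2 le_rfl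
    exact hA.trans hB.symm
  -- acyclicity: every edge is a bridge
  have hbridge : ∀ A B : H, r A B →
      ¬ (G \ SimpleGraph.fromEdgeSet {s(A, B)}).Reachable A B := by
    intro A B hAB hre
    have hstep : ∀ u v : H, (G \ SimpleGraph.fromEdgeSet {s(A, B)}).Adj u v →
        (u : Set M) ⊆ A → (v : Set M) ⊆ A := by
      intro u v huv hu
      have hadj : G.Adj u v := huv.1
      have hnot : s(u, v) ≠ s(A, B) := by
        intro h
        exact huv.2 (by simp [h, hadj.ne])
      rw [hGdef, SimpleGraph.fromRel_adj] at hadj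
      rcases hadj.2 with hc | hc
      · -- u ⊂ v (cover)
        have hun : (u : Set M).Nonempty := hne _ u.2
        have hvA : ((v : Set M) ∩ A).Nonempty := by
          obtain ⟨a, ha⟩ := hun
          exact ⟨a, hc.1.subset ha, hu ha⟩
        rcases hcomp _ v.2 _ A.2 hvA with h | h
        · exact h
        · rcases h.eq_or_ssubset with h | h
          · exact h.ge
          · -- A ⊂ v, u ⊆ A
            rcases hu.eq_or_ssubset with h2 | h2
            · -- u = A, so v covers A; uniqueness forces v = B
              obtain ⟨P, hP⟩ := hmin (A : Set M) A.2 (by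
                intro habs
                rw [habs] at h
                exact h.not_subset (Set.subset_univ _))
              have hvP : (v : Set M) = P := by
                refine hcovmin _ A.2 _ v.2 h ?_ P hP
                rw [← h2]
                exact hc.2
              have hBP : (B : Set M) = P :=
                hcovmin _ A.2 _ B.2 hAB.1 hAB.2 P hP
              have hvB : v = B := Subtype.ext (hvP.trans hBP.symm)
              have huA : u = A := Subtype.ext h2
              exact absurd (by rw [hvB, huA]) hnot
            · -- u ⊂ A ⊂ v contradicts cover
              exact absurd ⟨A, A.2, h2, h⟩ hc.2
      · -- v ⊂ u
        exact hc.1.subset.trans hu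
    obtain ⟨w⟩ := hre
    have hwalk : ∀ {x y : H} (w : (G \ SimpleGraph.fromEdgeSet {s(A, B)}).Walk x y),
        (x : Set M) ⊆ A → (y : Set M) ⊆ A := by
      intro x y w
      induction w with
      | nil => exact id
      | cons h w ih => exact fun hx => ih (hstep _ _ h hx)
    exact hAB.1.not_subset (hwalk w subset_rfl)
  have hacyc : G.IsAcyclic := by
    rw [SimpleGraph.isAcyclic_iff_forall_adj_isBridge]
    intro v w hvw
    have hvw' := hvw
    rw [hGdef, SimpleGraph.fromRel_adj] at hvw'
    rcases hvw'.2 with hc | hc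
    · exact hbridge v w hc
    · rw [Sym2.eq_swap]
      exact hbridge w v hc
  exact ⟨hconn, hacyc⟩
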